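/- Let A be a C*-algebra and let E ⊆ A be a selfadjoint subspace. Then E is approximately positively generated (the closure of {p − q : p, q ∈ E₊} equals E_sa) if and only if for every n ∈ ℕ the space Mₙ(E) is approximately positively generated (the closure of {P − Q : P, Q ∈ Mₙ(E)₊} equals Mₙ(E)_sa). -/

import Mathlib

open Matrix

noncomputable section

/-- The `n`-th matrix level `Mₙ(E)` of a subspace `E` of a C*-algebra `A`, realized inside a
C*-algebra `M` given together with a ⋆-algebra isomorphism `e : Mₙ(A) ≃⋆ₐ[ℂ] M`. -/
def matrixLevelSet {A M : Type*} [NonUnitalCStarAlgebra A] [NonUnitalCStarAlgebra M] {n : ℕ}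
    (E : Submodule ℂ A) (e : Matrix (Fin n) (Fin n) A ≃⋆ₐ[ℂ] M) : Set M :=
  {X : M | ∀ i j, e.symm X i j ∈ E}

/-- A subspace `S` of a C*-algebra `B` is approximately positively generated:
the closure of the set of differences of positive elements of `S` is the set of
selfadjoint elements of `S`. -/
def IsApproxPositivelyGenerated {B : Type*} [NonUnitalCStarAlgebra B] [PartialOrder B]
    (S : Set B) : Prop :=
  closure {y : B | ∃ p q : B, p ∈ S ∧ 0 ≤ p ∧ q ∈ S ∧ 0 ≤ q ∧ y = p - q} =
    {x : B | x ∈ S ∧ star x = x}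

namespace Stmt7Aux

section Transfer

variable {A B : Type*} [NonUnitalCStarAlgebra A] [NonUnitalCStarAlgebra B]
  [PartialOrder A] [StarOrderedRing A] [PartialOrder B] [StarOrderedRing B]

lemma starAlgEquiv_map_nonneg (g : A ≃⋆ₐ[ℂ] B) {a : A} (ha : 0 ≤ a) : 0 ≤ g a := by
  rw [StarOrderedRing.nonneg_iff] at ha ⊢
  induction ha using AddSubmonoid.closure_induction with
  | mem x hx =>
    obtain ⟨s, rfl⟩ := hx
    exact AddSubmonoid.subset_closure ⟨g s, by simp only [← map_star g, ← _root_.map_mul g]⟩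
  | zero => simpa using AddSubmonoid.zero_mem _
  | add x y _ _ hx hy => rw [map_add]; exact AddSubmonoid.add_mem _ hx hy

lemma starAlgEquiv_nonneg_iff (g : A ≃⋆ₐ[ℂ] B) (a : A) : 0 ≤ g a ↔ 0 ≤ a :=
  ⟨fun h => by simpa using starAlgEquiv_map_nonneg g.symm h, starAlgEquiv_map_nonneg g⟩

lemma starAlgEquiv_isometry (g : A ≃⋆ₐ[ℂ] B) : Isometry g :=
  NonUnitalStarAlgHom.isometry g g.injective

def starAlgEquivHomeomorph (g : A ≃⋆ₐ[ℂ] B) : A ≃ₜ B where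
  toFun := g
  invFun := g.symm
  left_inv := g.symm_apply_apply
  right_inv := g.apply_symm_apply
  continuous_toFun := (starAlgEquiv_isometry g).continuous
  continuous_invFun := (starAlgEquiv_isometry g.symm).continuous

lemma apg_image (g : A ≃⋆ₐ[ℂ] B) (S : Set A) :
    IsApproxPositivelyGenerated (g '' S) ↔ IsApproxPositivelyGenerated S := by
  unfold IsApproxPositivelyGenerated
  have h1 : {y : B | ∃ p q : B, p ∈ g '' S ∧ 0 ≤ p ∧ q ∈ g '' S ∧ 0 ≤ q ∧ y = p - q}
      = g '' {y : A | ∃ p q : A, p ∈ S ∧ 0 ≤ p ∧ q ∈ S ∧ 0 ≤ q ∧ y = p - q} := by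
    ext y
    constructor
    · rintro ⟨p, q, ⟨p', hp', rfl⟩, hp0, ⟨q', hq', rfl⟩, hq0, rfl⟩
      exact ⟨p' - q', ⟨p', q', hp', (starAlgEquiv_nonneg_iff g p').mp hp0, hq',
        (starAlgEquiv_nonneg_iff g q').mp hq0, rfl⟩, (map_sub g _ _)⟩
    · rintro ⟨y', ⟨p, q, hp, hp0, hq, hq0, rfl⟩, rfl⟩
      exact ⟨g p, g q, ⟨p, hp, rfl⟩, starAlgEquiv_map_nonneg g hp0, ⟨q, hq, rfl⟩,
        starAlgEquiv_map_nonneg g hq0, (map_sub g _ _)⟩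
  have h2 : {x : B | x ∈ g '' S ∧ star x = x} = g '' {x : A | x ∈ S ∧ star x = x} := by
    ext x
    constructor
    · rintro ⟨⟨x', hx', rfl⟩, hsa⟩
      refine ⟨x', ⟨hx', ?_⟩, rfl⟩
      have h := congrArg g.symm hsa
      rwa [← show g (star x') = star (g x') from map_star g x', g.symm_apply_apply,
        g.symm_apply_apply] at h
    · rintro ⟨x', ⟨hx', hsa⟩, rfl⟩
      exact ⟨⟨x', hx', rfl⟩, by rw [← show g (star x') = star (g x') from map_star g x', hsa]⟩
  have h3 : ∀ s : Set A, closure (g '' s) = g '' closure s := fun s =>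
    ((starAlgEquivHomeomorph g).image_closure s).symm
  rw [h1, h2, h3]
  exact Set.image_eq_image g.injective

/-- `A` is ⋆-isomorphic to 1×1 matrices over `A`. -/
def oneByOne (A : Type*) [NonUnitalCStarAlgebra A] : A ≃⋆ₐ[ℂ] Matrix (Fin 1) (Fin 1) A where
  toFun a := Matrix.of fun _ _ => a
  invFun X := X 0 0
  left_inv a := rfl
  right_inv X := by ext i j; simp [Subsingleton.elim i 0, Subsingleton.elim j 0]
  map_add' a b := by ext i j; simp
  map_mul' a b := by ext i j; simp [Matrix.mul_apply]
  map_smul' c a := by ext i j; simp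
  map_star' a := by ext i j; simp [Matrix.star_apply]

end Transfer

section MatrixLevel

variable {A B : Type*} [NonUnitalCStarAlgebra A] [NonUnitalCStarAlgebra B] {n : ℕ}

lemma star_stdBasisMatrix (i j : Fin n) (a : A) :
    star (single i j a) = single j i (star a) := by
  ext a' b'
  simp only [Matrix.star_apply, single, of_apply]
  rw [apply_ite star, star_zero]
  congr 1
  simp [and_comm, eq_comm]

lemma stdBasisMatrix_sub (i j : Fin n) (a b : A) :
    single i j (a - b) = single i j a - single i j b := by
  ext a' b'
  simp only [single, Matrix.sub_apply, of_apply]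
  split_ifs <;> simp

/-- The corner embedding `A → B` determined by `f` and a diagonal index. -/
def cornerHom (f : Matrix (Fin n) (Fin n) A ≃⋆ₐ[ℂ] B) (j : Fin n) : A →⋆ₙₐ[ℂ] B where
  toFun a := f (single j j a)
  map_smul' c a := by
    show f (single j j (c • a)) = c • f (single j j a)
    rw [← smul_single, _root_.map_smul f]
  map_zero' := by simp
  map_add' a b := by
    show f (single j j (a + b)) = f (single j j a) + f (single j j b)
    rw [single_add, map_add]
  map_mul' a b := by
    show f (single j j (a * b)) = f (single j j a) * f (single j j b)
    rw [← _root_.map_mul f, single_mul_single_same]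
  map_star' a := by
    show f (single j j (star a)) = star (f (single j j a))
    rw [← map_star f, star_stdBasisMatrix]

lemma cornerHom_injective (f : Matrix (Fin n) (Fin n) A ≃⋆ₐ[ℂ] B) (j : Fin n) :
    Function.Injective (cornerHom f j) := by
  intro a b hab
  have h := f.injective hab
  have := congrArg (fun M => M j j) h
  simpa using this

lemma norm_cornerHom (f : Matrix (Fin n) (Fin n) A ≃⋆ₐ[ℂ] B) (j : Fin n) (a : A) :
    ‖cornerHom f j a‖ = ‖a‖ :=
  NonUnitalStarAlgHom.norm_map (cornerHom f j) (cornerHom_injective f j) a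

lemma norm_entryEmbed (f : Matrix (Fin n) (Fin n) A ≃⋆ₐ[ℂ] B) (i j : Fin n) (a : A) :
    ‖f (single i j a)‖ = ‖a‖ := by
  have h2 : star (f (single i j a)) * f (single i j a)
      = cornerHom f j (star a * a) := by
    rw [← map_star f, ← _root_.map_mul f, star_stdBasisMatrix, single_mul_single_same]
    rfl
  have h3 : ‖f (single i j a)‖ * ‖f (single i j a)‖ = ‖a‖ * ‖a‖ := by
    rw [← CStarRing.norm_star_mul_self, h2, norm_cornerHom, CStarRing.norm_star_mul_self]
  nlinarith [norm_nonneg (f (single i j a)), norm_nonneg a]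

lemma continuous_entryEmbed (f : Matrix (Fin n) (Fin n) A ≃⋆ₐ[ℂ] B) (i j : Fin n) :
    Continuous (fun a : A => f (single i j a)) := by
  refine (LipschitzWith.of_dist_le_mul (K := 1) fun a b => ?_).continuous
  rw [dist_eq_norm, dist_eq_norm, NNReal.coe_one, one_mul, ← map_sub f, ← stdBasisMatrix_sub,
    norm_entryEmbed]

lemma corner_compress (Y : Matrix (Fin n) (Fin n) A) (i j : Fin n) (c d : A) :
    single i i c * Y * single j j d = single i j (c * Y i j * d) := by
  ext a b
  rcases eq_or_ne a i with rfl | ha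
  · rcases eq_or_ne b j with rfl | hb
    · rw [mul_single_apply_same, single_mul_apply_same,
        single_apply_same]
    · simp [hb, Ne.symm hb]
  · simp [Matrix.mul_assoc, ha, Ne.symm ha]

lemma entry_norm_le (f : Matrix (Fin n) (Fin n) A ≃⋆ₐ[ℂ] B) (x : B) (i j : Fin n) :
    ‖f.symm x i j‖ ≤ ‖x‖ := by
  set y := f.symm x i j with hy
  rcases eq_or_ne y 0 with h0 | h0
  · rw [h0]; simpa using norm_nonneg x
  have key : ∀ c d : A, ‖c * y * d‖ ≤ ‖c‖ * ‖x‖ * ‖d‖ := by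
    intro c d
    have hm : cornerHom f i c * x * cornerHom f j d = f (single i j (c * y * d)) := by
      conv_lhs => rw [← f.apply_symm_apply x]
      show f _ * f _ * f _ = _
      rw [← _root_.map_mul f, ← _root_.map_mul f, corner_compress]
    calc ‖c * y * d‖ = ‖f (single i j (c * y * d))‖ := (norm_entryEmbed f i j _).symm
      _ = ‖cornerHom f i c * x * cornerHom f j d‖ := by rw [hm]
      _ ≤ ‖cornerHom f i c * x‖ * ‖cornerHom f j d‖ := norm_mul_le _ _
      _ ≤ ‖cornerHom f i c‖ * ‖x‖ * ‖cornerHom f j d‖ :=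
          mul_le_mul_of_nonneg_right (norm_mul_le _ _) (norm_nonneg _)
      _ = ‖c‖ * ‖x‖ * ‖d‖ := by rw [norm_cornerHom, norm_cornerHom]
  have h4 := key (star y) (star y * y)
  have h6 : ‖star y * y * (star y * y)‖ = (‖y‖ * ‖y‖) * (‖y‖ * ‖y‖) := by
    conv_lhs => rw [show star y * y * (star y * y)
      = star (star y * y) * (star y * y) by rw [StarMul.star_mul, star_star]]
    rw [CStarRing.norm_star_mul_self, CStarRing.norm_star_mul_self]
  have h7 : ‖star y * y‖ = ‖y‖ * ‖y‖ := CStarRing.norm_star_mul_self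
  have h8 : ‖star y‖ = ‖y‖ := norm_star y
  have hypos : 0 < ‖y‖ := norm_pos_iff.mpr h0
  rw [h6, h8, h7] at h4
  have h9 : ‖y‖ * ‖y‖ ≤ ‖y‖ * ‖x‖ := (mul_le_mul_iff_left₀ (mul_pos hypos hypos)).mp h4
  exact (mul_le_mul_iff_right₀ hypos).mp h9

lemma continuous_entry (f : Matrix (Fin n) (Fin n) A ≃⋆ₐ[ℂ] B) (i j : Fin n) :
    Continuous (fun x : B => f.symm x i j) := by
  refine (LipschitzWith.of_dist_le_mul (K := 1) fun x y => ?_).continuous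
  rw [dist_eq_norm, dist_eq_norm, NNReal.coe_one, one_mul]
  have : f.symm x i j - f.symm y i j = f.symm (x - y) i j := by
    rw [map_sub f.symm, Matrix.sub_apply]
  rw [this]
  exact entry_norm_le f (x - y) i j

lemma isClosed_matrixLevelSet (E : Submodule ℂ A) (hEclosed : IsClosed (E : Set A))
    (f : Matrix (Fin n) (Fin n) A ≃⋆ₐ[ℂ] B) : IsClosed (matrixLevelSet E f) := by
  have : matrixLevelSet E f
      = ⋂ (i : Fin n) (j : Fin n), (fun x : B => f.symm x i j) ⁻¹' (E : Set A) := by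
    ext x; simp [matrixLevelSet, Set.mem_iInter]
  rw [this]
  exact isClosed_iInter fun i => isClosed_iInter fun j =>
    hEclosed.preimage (continuous_entry f i j)

variable [PartialOrder A] [StarOrderedRing A] [PartialOrder B] [StarOrderedRing B]

/-- Positivity of `f` applied to elementary rank-one-type matrices. -/
lemma pos_lam (f : Matrix (Fin n) (Fin n) A ≃⋆ₐ[ℂ] B) (i0 : Fin n) (lam : Fin n → ℂ)
    {p : A} (hp : 0 ≤ p) :
    0 ≤ f (Matrix.of fun a b => (starRingEnd ℂ (lam a) * lam b) • p) := by
  rw [StarOrderedRing.nonneg_iff] at hp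
  induction hp using AddSubmonoid.closure_induction with
  | mem q hq =>
    obtain ⟨s, rfl⟩ := hq
    set V : Matrix (Fin n) (Fin n) A := Matrix.of fun a b => if a = i0 then lam b • s else 0
      with hV
    have hVV : (Matrix.of fun a b : Fin n => (starRingEnd ℂ (lam a) * lam b) • (star s * s))
        = star V * V := by
      ext a b
      rw [Matrix.mul_apply]
      have : ∀ c : Fin n, star V a c * V c b
          = if c = i0 then (starRingEnd ℂ (lam a) * lam b) • (star s * s) else 0 := by
        intro c
        rw [Matrix.star_apply, hV]
        simp only [Matrix.of_apply]
        split_ifs with hc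
        · rw [star_smul, smul_mul_smul_comm]
          congr 1
        · simp
      simp only [this]
      simp
    have heq : f (Matrix.of fun a b : Fin n => (starRingEnd ℂ (lam a) * lam b) • (star s * s))
        = star (f V) * f V := by
      rw [hVV, _root_.map_mul f, map_star f]
    rw [heq]
    exact star_mul_self_nonneg _
  | zero =>
    have : (Matrix.of fun a b : Fin n => (starRingEnd ℂ (lam a) * lam b) • (0 : A)) = 0 := by
      ext a b; simp
    rw [this, map_zero]
  | add q r _ _ ihq ihr =>
    have : (Matrix.of fun a b : Fin n => (starRingEnd ℂ (lam a) * lam b) • (q + r))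
        = (Matrix.of fun a b : Fin n => (starRingEnd ℂ (lam a) * lam b) • q)
          + (Matrix.of fun a b : Fin n => (starRingEnd ℂ (lam a) * lam b) • r) := by
      ext a b; simp [smul_add]
    rw [this, map_add]
    exact add_nonneg ihq ihr


lemma std_eq_of (i j : Fin n) (p : A) :
    single i j p = Matrix.of fun a b =>
      ((if a = i then (1:ℂ) else 0) * (if b = j then 1 else 0)) • p := by
  ext a b
  rcases eq_or_ne a i with rfl | ha
  · rcases eq_or_ne b j with rfl | hb
    · simp [single_apply_same]
    · simp [hb, Ne.symm hb]
  · simp [ha, Ne.symm ha]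

lemma conj_chi (P : Prop) [Decidable P] :
    starRingEnd ℂ (if P then 1 else 0) = if P then 1 else 0 := by
  split_ifs <;> simp

lemma conj_chiI (P : Prop) [Decidable P] :
    starRingEnd ℂ (if P then Complex.I else 0) = if P then -Complex.I else 0 := by
  split_ifs <;> simp

lemma ite_eq_mul_chi (P : Prop) [Decidable P] (c : ℂ) :
    (if P then c else 0) = c * (if P then 1 else 0) := by
  split_ifs <;> simp

lemma ofS (i : Fin n) (p : A) :
    (Matrix.of fun a b => (starRingEnd ℂ (if a = i then (1:ℂ) else 0)
        * (if b = i then (1:ℂ) else 0)) • p) = single i i p := by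
  rw [std_eq_of]
  ext a b
  simp only [Matrix.of_apply, conj_chi]

lemma ofD (i j : Fin n) (p : A) :
    (Matrix.of fun a b => (starRingEnd ℂ
        ((if a = i then (1:ℂ) else 0) + (if a = j then 1 else 0))
        * ((if b = i then (1:ℂ) else 0) + (if b = j then 1 else 0))) • p)
      = single i i p + single i j p + single j i p
        + single j j p := by
  rw [std_eq_of i i, std_eq_of i j, std_eq_of j i, std_eq_of j j]
  ext a b
  simp only [Matrix.of_apply, Matrix.add_apply, map_add, conj_chi]
  rw [← add_smul, ← add_smul, ← add_smul]
  congr 1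
  ring

lemma ofI (i j : Fin n) (p : A) :
    (Matrix.of fun a b => (starRingEnd ℂ
        ((if a = i then (1:ℂ) else 0) + (if a = j then Complex.I else 0))
        * ((if b = i then (1:ℂ) else 0) + (if b = j then Complex.I else 0))) • p)
      = single i i p + single i j (Complex.I • p)
        + single j i ((-Complex.I) • p) + single j j p := by
  rw [std_eq_of i i, std_eq_of i j, std_eq_of j i, std_eq_of j j]
  ext a b
  simp only [Matrix.of_apply, Matrix.add_apply, map_add, conj_chi, conj_chiI, smul_smul]
  rw [← add_smul, ← add_smul, ← add_smul]
  congr 1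
  rw [ite_eq_mul_chi (a = j) (-Complex.I), ite_eq_mul_chi (b = j) Complex.I]
  have hI := Complex.I_mul_I
  linear_combination (-((if a = j then (1:ℂ) else 0) * (if b = j then (1:ℂ) else 0))) * hI

variable (E : Submodule ℂ A)

lemma std_mem {p : A} (hp : p ∈ E) (i j a b : Fin n) :
    single i j p a b ∈ E := by
  simp only [single, Matrix.of_apply]
  split_ifs
  · exact hp
  · exact E.zero_mem

set_option maxHeartbeats 1000000 in
lemma matrix_apg (hEclosed : IsClosed (E : Set A)) (hEstar : ∀ x ∈ E, star x ∈ E)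
    (hE : IsApproxPositivelyGenerated (E : Set A))
    (f : Matrix (Fin n) (Fin n) A ≃⋆ₐ[ℂ] B) :
    IsApproxPositivelyGenerated (matrixLevelSet E f) := by
  classical
  have hS0 : (0 : B) ∈ matrixLevelSet E f := by
    intro i j; rw [map_zero]; simpa using E.zero_mem
  have hSadd : ∀ {x y : B}, x ∈ matrixLevelSet E f → y ∈ matrixLevelSet E f →
      x + y ∈ matrixLevelSet E f := by
    intro x y hx hy i j
    rw [map_add, Matrix.add_apply]
    exact E.add_mem (hx i j) (hy i j)
  set G : AddSubgroup B :=
    { carrier := {y : B | ∃ p q : B, p ∈ matrixLevelSet E f ∧ 0 ≤ p ∧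
        q ∈ matrixLevelSet E f ∧ 0 ≤ q ∧ y = p - q}
      zero_mem' := ⟨0, 0, hS0, le_refl 0, hS0, le_refl 0, by simp⟩
      add_mem' := by
        rintro x y ⟨p, q, hp, hp0, hq, hq0, rfl⟩ ⟨p', q', hp', hp0', hq', hq0', rfl⟩
        exact ⟨p + p', q + q', hSadd hp hp', add_nonneg hp0 hp0', hSadd hq hq',
          add_nonneg hq0 hq0', by abel⟩
      neg_mem' := by
        rintro x ⟨p, q, hp, hp0, hq, hq0, rfl⟩
        exact ⟨q, p, hq, hq0, hp, hp0, by abel⟩ } with hG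
  have hposS : ∀ {p : A} (i : Fin n) (lam : Fin n → ℂ), p ∈ E →
      f (Matrix.of fun a b => (starRingEnd ℂ (lam a) * lam b) • p) ∈ matrixLevelSet E f := by
    intro p i lam hpE a b
    rw [f.symm_apply_apply]
    exact E.smul_mem _ hpE
  have genD : ∀ (i j : Fin n) (p : A), p ∈ E → 0 ≤ p →
      f (single i j p) + f (single j i p) ∈ G := by
    intro i j p hpE hp0
    refine ⟨f (Matrix.of fun a b => (starRingEnd ℂ
        ((if a = i then (1:ℂ) else 0) + (if a = j then 1 else 0))
        * ((if b = i then (1:ℂ) else 0) + (if b = j then 1 else 0))) • p),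
      f (single i i p) + f (single j j p),
      hposS i _ hpE, pos_lam f i _ hp0, ?_, ?_, ?_⟩
    · rw [← ofS i p, ← ofS j p]
      exact hSadd (hposS i (fun a => if a = i then (1:ℂ) else 0) hpE)
        (hposS j (fun a => if a = j then (1:ℂ) else 0) hpE)
    · rw [← ofS i p, ← ofS j p]
      exact add_nonneg (pos_lam f i _ hp0) (pos_lam f j _ hp0)
    · rw [ofD i j p, ← map_add f, ← map_add f, ← map_sub f]
      congr 1
      abel
  have genI : ∀ (i j : Fin n) (p : A), p ∈ E → 0 ≤ p →
      f (single i j (Complex.I • p)) + f (single j i ((-Complex.I) • p)) ∈ G := by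
    intro i j p hpE hp0
    refine ⟨f (Matrix.of fun a b => (starRingEnd ℂ
        ((if a = i then (1:ℂ) else 0) + (if a = j then Complex.I else 0))
        * ((if b = i then (1:ℂ) else 0) + (if b = j then Complex.I else 0))) • p),
      f (single i i p) + f (single j j p),
      hposS i _ hpE, pos_lam f i _ hp0, ?_, ?_, ?_⟩
    · rw [← ofS i p, ← ofS j p]
      exact hSadd (hposS i (fun a => if a = i then (1:ℂ) else 0) hpE)
        (hposS j (fun a => if a = j then (1:ℂ) else 0) hpE)
    · rw [← ofS i p, ← ofS j p]
      exact add_nonneg (pos_lam f i _ hp0) (pos_lam f j _ hp0)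
    · rw [ofI i j p, ← map_add f, ← map_add f, ← map_sub f]
      congr 1
      abel
  have memT : ∀ (i j : Fin n) (h : A), h ∈ E → star h = h →
      f (single i j h) + f (single j i h) ∈ G.topologicalClosure := by
    intro i j h hhE hsa
    have hmemsa : h ∈ {x : A | x ∈ (E : Set A) ∧ star x = x} := ⟨hhE, hsa⟩
    rw [← hE] at hmemsa
    have hTcont : Continuous (fun w : A => f (single i j w) + f (single j i w)) :=
      (continuous_entryEmbed f i j).add (continuous_entryEmbed f j i)
    have hsub : {y : A | ∃ p q : A, p ∈ (E : Set A) ∧ 0 ≤ p ∧ q ∈ (E : Set A) ∧ 0 ≤ q ∧ y = p - q}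
        ⊆ (fun w : A => f (single i j w) + f (single j i w)) ⁻¹'
          (G.topologicalClosure : Set B) := by
      rintro y ⟨p, q, hp, hp0, hq, hq0, rfl⟩
      have heq : f (single i j (p - q)) + f (single j i (p - q))
          = (f (single i j p) + f (single j i p))
            - (f (single i j q) + f (single j i q)) := by
        rw [stdBasisMatrix_sub, stdBasisMatrix_sub, map_sub f, map_sub f]
        abel
      rw [Set.mem_preimage]
      show f (single i j (p - q)) + f (single j i (p - q))
        ∈ (G.topologicalClosure : Set B)
      rw [heq]
      exact subset_closure (G.sub_mem (genD i j p hp hp0) (genD i j q hq hq0))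
    have hcl : IsClosed ((fun w : A => f (single i j w) + f (single j i w)) ⁻¹'
        (G.topologicalClosure : Set B)) :=
      (isClosed_closure).preimage hTcont
    exact closure_minimal hsub hcl hmemsa
  have memT' : ∀ (i j : Fin n) (k : A), k ∈ E → star k = k →
      f (single i j (Complex.I • k)) + f (single j i ((-Complex.I) • k))
        ∈ G.topologicalClosure := by
    intro i j k hkE hsa
    have hmemsa : k ∈ {x : A | x ∈ (E : Set A) ∧ star x = x} := ⟨hkE, hsa⟩
    rw [← hE] at hmemsa
    have hTcont : Continuous (fun w : A =>
        f (single i j (Complex.I • w)) + f (single j i ((-Complex.I) • w))) := by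
      apply Continuous.add
      · exact (continuous_entryEmbed f i j).comp (continuous_const_smul _)
      · exact (continuous_entryEmbed f j i).comp (continuous_const_smul _)
    have hsub : {y : A | ∃ p q : A, p ∈ (E : Set A) ∧ 0 ≤ p ∧ q ∈ (E : Set A) ∧ 0 ≤ q ∧ y = p - q}
        ⊆ (fun w : A => f (single i j (Complex.I • w))
            + f (single j i ((-Complex.I) • w))) ⁻¹'
          (G.topologicalClosure : Set B) := by
      rintro y ⟨p, q, hp, hp0, hq, hq0, rfl⟩
      have heq : f (single i j (Complex.I • (p - q)))
          + f (single j i ((-Complex.I) • (p - q)))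
          = (f (single i j (Complex.I • p)) + f (single j i ((-Complex.I) • p)))
            - (f (single i j (Complex.I • q))
              + f (single j i ((-Complex.I) • q))) := by
        rw [smul_sub, smul_sub, stdBasisMatrix_sub, stdBasisMatrix_sub, map_sub f, map_sub f]
        abel
      rw [Set.mem_preimage]
      show f (single i j (Complex.I • (p - q)))
          + f (single j i ((-Complex.I) • (p - q))) ∈ (G.topologicalClosure : Set B)
      rw [heq]
      exact subset_closure (G.sub_mem (genI i j p hp hp0) (genI i j q hq hq0))
    have hcl : IsClosed ((fun w : A => f (single i j (Complex.I • w))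
        + f (single j i ((-Complex.I) • w))) ⁻¹' (G.topologicalClosure : Set B)) :=
      (isClosed_closure).preimage hTcont
    exact closure_minimal hsub hcl hmemsa
  have term_mem : ∀ (i j : Fin n) (z : A), z ∈ E →
      f (single i j z) + f (single j i (star z)) ∈ G.topologicalClosure := by
    intro i j z hz
    set h := ((2:ℂ)⁻¹) • (z + star z) with hh
    set k := (-(2:ℂ)⁻¹ * Complex.I) • (z - star z) with hk
    have hhE : h ∈ E := E.smul_mem _ (E.add_mem hz (hEstar z hz))
    have hkE : k ∈ E := E.smul_mem _ (E.sub_mem hz (hEstar z hz))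
    have hhsa : star h = h := by
      rw [hh, star_smul, star_add, star_star]
      have h1 : star ((2:ℂ)⁻¹) = (2:ℂ)⁻¹ := by simp
      rw [h1, add_comm]
    have hksa : star k = k := by
      rw [hk, star_smul, star_sub, star_star]
      have h1 : star (-(2:ℂ)⁻¹ * Complex.I) = (2:ℂ)⁻¹ * Complex.I := by
        simp [Complex.star_def, Complex.conj_I]
      rw [h1, show star z - z = -(z - star z) by abel, smul_neg, ← neg_smul]
      congr 1
      ring
    have hc1 : Complex.I * (-(2:ℂ)⁻¹ * Complex.I) = (2:ℂ)⁻¹ := by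
      linear_combination (-(2:ℂ)⁻¹) * Complex.I_mul_I
    have hc2 : (-Complex.I) * (-(2:ℂ)⁻¹ * Complex.I) = -(2:ℂ)⁻¹ := by
      linear_combination ((2:ℂ)⁻¹) * Complex.I_mul_I
    have hz1 : z = h + Complex.I • k := by
      rw [hh, hk, smul_smul, hc1]
      module
    have hz2 : star z = h + (-Complex.I) • k := by
      rw [hh, hk, smul_smul, hc2]
      module
    have e1 : single i j z = single i j h
        + single i j (Complex.I • k) := by
      conv_lhs => rw [hz1]
      rw [single_add]
    have e2 : single j i (star z) = single j i h
        + single j i ((-Complex.I) • k) := by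
      conv_lhs => rw [hz2]
      rw [single_add]
    rw [e1, e2, map_add f, map_add f]
    have hre : f (single i j h) + f (single i j (Complex.I • k))
        + (f (single j i h) + f (single j i ((-Complex.I) • k)))
        = (f (single i j h) + f (single j i h))
          + (f (single i j (Complex.I • k))
            + f (single j i ((-Complex.I) • k))) := by abel
    rw [hre]
    exact AddSubgroup.add_mem _ (memT i j h hhE hhsa) (memT' i j k hkE hksa)
  unfold IsApproxPositivelyGenerated
  apply subset_antisymm
  · apply closure_minimal
    · rintro y ⟨p, q, hp, hp0, hq, hq0, rfl⟩
      refine ⟨fun i j => ?_, ?_⟩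
      · rw [map_sub f.symm, Matrix.sub_apply]
        exact E.sub_mem (hp i j) (hq i j)
      · rw [star_sub, (IsSelfAdjoint.of_nonneg hp0).star_eq, (IsSelfAdjoint.of_nonneg hq0).star_eq]
    · have : {x : B | x ∈ matrixLevelSet E f ∧ star x = x}
          = matrixLevelSet E f ∩ {x : B | star x = x} := rfl
      rw [this]
      exact (isClosed_matrixLevelSet E hEclosed f).inter
        (isClosed_eq continuous_star continuous_id)
  · rintro x ⟨hxS, hxsa⟩
    have hYsa : ∀ i j : Fin n, star (f.symm x i j) = f.symm x j i := by
      intro i j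
      have hsY : star (f.symm x) = f.symm x := by rw [← map_star f.symm, hxsa]
      calc star (f.symm x i j) = (star (f.symm x)) j i := (Matrix.star_apply _ _ _).symm
        _ = f.symm x j i := by rw [hsY]
    have hstar2 : ∀ i j : Fin n, star ((2:ℂ)⁻¹ • f.symm x i j) = (2:ℂ)⁻¹ • f.symm x j i := by
      intro i j
      rw [star_smul, hYsa]
      congr 1
      simp
    have hM : f.symm x = ∑ i : Fin n, ∑ j : Fin n,
        (single i j ((2:ℂ)⁻¹ • f.symm x i j)
          + single j i (star ((2:ℂ)⁻¹ • f.symm x i j))) := by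
      have e1 : ∑ i : Fin n, ∑ j : Fin n, single i j ((2:ℂ)⁻¹ • f.symm x i j)
          = (2:ℂ)⁻¹ • f.symm x := by
        simp only [← smul_single, ← Finset.smul_sum]
        rw [← matrix_eq_sum_single]
      have e2 : ∑ i : Fin n, ∑ j : Fin n, single j i ((2:ℂ)⁻¹ • f.symm x j i)
          = (2:ℂ)⁻¹ • f.symm x := by
        rw [Finset.sum_comm]
        exact e1
      simp only [hstar2]
      rw [Finset.sum_congr rfl fun i _ => Finset.sum_add_distrib,
        Finset.sum_add_distrib, e1, e2]
      module
    have hxdecomp : x = ∑ i : Fin n, ∑ j : Fin n,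
        (f (single i j ((2:ℂ)⁻¹ • f.symm x i j))
          + f (single j i (star ((2:ℂ)⁻¹ • f.symm x i j)))) := by
      conv_lhs => rw [← f.apply_symm_apply x, hM]
      rw [map_sum f]
      refine Finset.sum_congr rfl fun i _ => ?_
      rw [map_sum f]
      exact Finset.sum_congr rfl fun j _ => map_add f _ _
    rw [hxdecomp]
    show _ ∈ (G.topologicalClosure : Set B)
    refine AddSubgroup.sum_mem _ fun i _ => AddSubgroup.sum_mem _ fun j _ => ?_
    exact term_mem i j _ (E.smul_mem _ (hxS i j))

end MatrixLevel

end Stmt7Aux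

theorem stmt_7 {A : Type*} [NonUnitalCStarAlgebra A] [PartialOrder A] [StarOrderedRing A]
    (E : Submodule ℂ A) (hEclosed : IsClosed (E : Set A)) (hEstar : ∀ x ∈ E, star x ∈ E)
    (M : ℕ → Type*) [∀ n, NonUnitalCStarAlgebra (M n)] [∀ n, PartialOrder (M n)]
    [∀ n, StarOrderedRing (M n)]
    (e : ∀ n, Matrix (Fin n) (Fin n) A ≃⋆ₐ[ℂ] M n) :
    IsApproxPositivelyGenerated (E : Set A) ↔
      ∀ n : ℕ, IsApproxPositivelyGenerated (matrixLevelSet E (e n)) := by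
  constructor
  · intro hE n
    exact Stmt7Aux.matrix_apg E hEclosed hEstar hE (e n)
  · intro h
    have h1 := h 1
    set g : A ≃⋆ₐ[ℂ] M 1 := (Stmt7Aux.oneByOne A).trans (e 1) with hg
    have him : g '' (E : Set A) = matrixLevelSet E (e 1) := by
      ext x
      constructor
      · rintro ⟨a, ha, rfl⟩ i j
        have h2 : g a = (e 1) ((Stmt7Aux.oneByOne A) a) := rfl
        rw [h2, (e 1).symm_apply_apply]
        have h3 : ((Stmt7Aux.oneByOne A) a) i j = a := rfl
        rw [h3]
        exact ha
      · intro hx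
        refine ⟨(e 1).symm x 0 0, hx 0 0, ?_⟩
        have h2 : g ((e 1).symm x 0 0) = (e 1) ((Stmt7Aux.oneByOne A) ((e 1).symm x 0 0)) := rfl
        rw [h2]
        have h3 : (Stmt7Aux.oneByOne A) ((e 1).symm x 0 0) = (e 1).symm x := by
          ext i j
          show (e 1).symm x 0 0 = (e 1).symm x i j
          rw [Subsingleton.elim i 0, Subsingleton.elim j 0]
        rw [h3, (e 1).apply_symm_apply]
    rw [← him] at h1
    exact (Stmt7Aux.apg_image g (E : Set A)).mp h1

end
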